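/- There exists a constant C > 0, depending only on d and γ, such that for all r ≥ 1, all integers k ≥ 1, and all ξ ≥ 0: ∫_{−ρ/2}^{ρ/2} e^{−t²κ̃₂/2} | e^{q_k(t)} − ∑_{ℓ=0}^{k} q_k(t)^ℓ/ℓ! | dt ≤ C^k k^{k/2} / ( √κ̃₂ · (√κ̃₂ · ρ)^{k+1} ). (Lemma 3.3.) -/

import Mathlib

open MeasureTheory Finset

noncomputable section

/-- ρ = r^{d/2} -/
def rho (d : ℕ) (r : ℝ) : ℝ := r ^ ((d : ℝ) / 2)

/-- tilted cumulant coefficients κ̃_n = d₁ ∫₀¹ e^{ξu/ρ} u^{n-1-d/γ} du -/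
def kt (d : ℕ) (γ r ξ : ℝ) (n : ℕ) : ℝ :=
  (2 - (d : ℝ) / γ) *
    ∫ u in (0:ℝ)..1, Real.exp (ξ * u / rho d r) * u ^ ((n : ℝ) - 1 - (d : ℝ) / γ)

/-- q_k(t) = ρ² ∑_{n=3}^{k+2} (it/ρ)^n κ̃_n/n! -/
def qk (d : ℕ) (γ r ξ : ℝ) (k : ℕ) (t : ℝ) : ℂ :=
  ((rho d r : ℝ) : ℂ) ^ 2 *
    ∑ n ∈ Finset.Icc 3 (k + 2),
      (Complex.I * (t : ℂ) / ((rho d r : ℝ) : ℂ)) ^ n *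
        ((kt d γ r ξ n / (n.factorial : ℝ) : ℝ) : ℂ)

lemma rpow_mul_exp_neg_le {x p : ℝ} (hx : 0 ≤ x) (hp : 0 < p) :
    x ^ p * Real.exp (-x) ≤ p ^ p := by
  rcases eq_or_lt_of_le hx with h | h
  · rw [← h, Real.zero_rpow hp.ne']
    simp only [zero_mul]
    positivity
  · have h1 : Real.log (x / p) ≤ x / p - 1 := Real.log_le_sub_one_of_pos (by positivity)
    rw [Real.log_div h.ne' hp.ne'] at h1
    rw [Real.rpow_def_of_pos h, Real.rpow_def_of_pos hp, ← Real.exp_add]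
    apply Real.exp_le_exp.2
    have h2 : p * (Real.log x - Real.log p) ≤ x - p := by
      have := mul_le_mul_of_nonneg_left h1 hp.le
      calc p * (Real.log x - Real.log p) ≤ p * (x / p - 1) := this
        _ = x - p := by field_simp
    nlinarith [hp]

lemma pow_le_exp_mul_factorial (k : ℕ) : (k:ℝ)^k ≤ Real.exp k * (k.factorial : ℝ) := by
  have h := Real.sum_le_exp_of_nonneg (x := (k:ℝ)) (Nat.cast_nonneg k) (k+1)
  have h2 : (k:ℝ)^k / (k.factorial : ℝ) ≤ ∑ i ∈ range (k+1), (k:ℝ)^i / (i.factorial : ℝ) := by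
    apply Finset.single_le_sum (f := fun i => (k:ℝ)^i / (i.factorial : ℝ))
      (fun i _ => by positivity) (self_mem_range_succ k)
  have h3 := h2.trans h
  rw [div_le_iff₀ (by positivity)] at h3
  linarith [h3]

lemma exp_taylor_bound (z : ℂ) (k : ℕ) :
    ‖Complex.exp z - ∑ l ∈ Finset.range (k+1), z ^ l / ((l.factorial : ℝ) : ℂ)‖ ≤
      ‖z‖ ^ (k+1) / ((k+1).factorial : ℝ) * Real.exp ‖z‖ := by
  set n := k + 1 with hn
  have hnorm : ∀ m : ℕ, ‖z ^ m / ((m.factorial : ℝ) : ℂ)‖ = ‖z‖ ^ m / (m.factorial : ℝ) := by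
    intro m
    rw [norm_div, norm_pow]
    simp [Complex.norm_natCast]
  have hsum : Summable (fun m : ℕ => z ^ m / ((m.factorial : ℝ) : ℂ)) := by
    apply Summable.of_norm
    simp only [hnorm]
    exact Real.summable_pow_div_factorial ‖z‖
  have hexp : Complex.exp z = ∑' m : ℕ, z ^ m / ((m.factorial : ℝ) : ℂ) := by
    rw [Complex.exp_eq_exp_ℂ, NormedSpace.exp_eq_tsum_div]
    norm_num
  have hsplit := Summable.sum_add_tsum_nat_add n hsum
  have hrem : Complex.exp z - ∑ l ∈ Finset.range n, z ^ l / ((l.factorial : ℝ) : ℂ)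
      = ∑' m : ℕ, z ^ (m + n) / (((m + n).factorial : ℝ) : ℂ) := by
    rw [hexp, ← hsplit]; ring
  rw [hrem]
  have hsum2 : Summable (fun m : ℕ => ‖z‖ ^ (m + n) / ((m + n).factorial : ℝ)) := by
    exact (summable_nat_add_iff n).2 (Real.summable_pow_div_factorial ‖z‖)
  calc ‖∑' m : ℕ, z ^ (m + n) / (((m + n).factorial : ℝ) : ℂ)‖
      ≤ ∑' m : ℕ, ‖z‖ ^ (m + n) / ((m + n).factorial : ℝ) := by
        simpa only [hnorm] using
          norm_tsum_le_tsum_norm (f := fun m : ℕ => z ^ (m + n) / (((m + n).factorial : ℝ) : ℂ))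
            (by simpa only [hnorm] using hsum2)
    _ ≤ ∑' m : ℕ, (‖z‖ ^ n / (n.factorial : ℝ)) * (‖z‖ ^ m / (m.factorial : ℝ)) := by
        apply Summable.tsum_le_tsum _ hsum2
        · exact (Real.summable_pow_div_factorial ‖z‖).mul_left _
        · intro m
          rw [div_mul_div_comm, ← pow_add]
          rw [add_comm n m] 
          apply div_le_div_of_nonneg_left (by positivity) (by positivity)
          · exact_mod_cast Nat.le_of_dvd (Nat.factorial_pos _) ((Nat.add_comm n m) ▸ Nat.factorial_mul_factorial_dvd_factorial_add n m)
    _ = ‖z‖ ^ n / (n.factorial : ℝ) * Real.exp ‖z‖ := by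
        rw [tsum_mul_left]
        congr 1
        rw [Real.exp_eq_exp_ℝ, NormedSpace.exp_eq_tsum_div]

lemma arith_bound (k : ℕ) (hk : 1 ≤ k) :
    (3*(3*(k:ℝ)+3)) ^ ((3*(k:ℝ)+3)/2) * Real.sqrt (6*Real.pi) / (3^(k+1) * ((k+1).factorial : ℝ))
      ≤ (1000000:ℝ)^k * (k:ℝ)^((k:ℝ)/2) := by
  have hx1 : (1:ℝ) ≤ (k:ℝ) := by exact_mod_cast hk
  have hx0 : (0:ℝ) < (k:ℝ) := by linarith
  set x : ℝ := (k:ℝ) with hxdef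
  have hp0 : (0:ℝ) < (3*x+3)/2 := by linarith
  have hsqrt : Real.sqrt (6*Real.pi) ≤ 5 := by
    have h6 : (6*Real.pi) ≤ 25 := by nlinarith [Real.pi_le_four]
    calc Real.sqrt (6*Real.pi) ≤ Real.sqrt 25 := Real.sqrt_le_sqrt h6
      _ = 5 := by rw [show (25:ℝ) = 5^2 by norm_num, Real.sqrt_sq (by norm_num)]
  have hexp52 : Real.exp (5/2) ≤ 13 := by
    have hsq : Real.exp (5/2) * Real.exp (5/2) = Real.exp 5 := by
      rw [← Real.exp_add]; norm_num
    have h5 : Real.exp 5 = (Real.exp 1)^(5:ℕ) := by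
      rw [← Real.exp_nat_mul]; norm_num
    have h5' : (Real.exp 1)^(5:ℕ) ≤ (2.7182818286:ℝ)^(5:ℕ) :=
      pow_le_pow_left₀ (Real.exp_pos 1).le Real.exp_one_lt_d9.le 5
    have h169 : Real.exp 5 ≤ 169 := by
      rw [h5]; refine h5'.trans (by norm_num)
    nlinarith [Real.exp_pos (5/2:ℝ)]
  -- factorial bound : x^x ≤ e^x * k!
  have hfac : x ^ ((x:ℝ)) ≤ Real.exp x * (k.factorial : ℝ) := by
    rw [hxdef, Real.rpow_natCast]
    exact pow_le_exp_mul_factorial k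
  have hfacpos : (0:ℝ) < (k.factorial : ℝ) := by positivity
  have hxle : x ≤ Real.exp x := by linarith [Real.add_one_le_exp x]
  -- step chain
  have step1 : (3*(3*x+3)) ^ ((3*x+3)/2) ≤ (5832:ℝ)^x * (5:ℝ)^x / 5 * x ^ ((3*x+3)/2) := by
    calc (3*(3*x+3)) ^ ((3*x+3)/2) ≤ (18*x) ^ ((3*x+3)/2) :=
          Real.rpow_le_rpow (by positivity) (by nlinarith) hp0.le
      _ = (18:ℝ) ^ ((3*x+3)/2) * x ^ ((3*x+3)/2) := Real.mul_rpow (by norm_num) hx0.le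
      _ ≤ (18:ℝ) ^ (3*x) * x ^ ((3*x+3)/2) := by
          apply mul_le_mul_of_nonneg_right _ (Real.rpow_nonneg hx0.le _)
          exact Real.rpow_le_rpow_of_exponent_le (by norm_num) (by nlinarith)
      _ = (5832:ℝ)^x * x ^ ((3*x+3)/2) := by
          have h183 : (18:ℝ)^(3:ℝ) = 5832 := by
            rw [show (3:ℝ) = ((3:ℕ):ℝ) by norm_num, Real.rpow_natCast]; norm_num
          rw [Real.rpow_mul (by norm_num : (0:ℝ) ≤ 18), h183]
      _ ≤ (5832:ℝ)^x * (5:ℝ)^x / 5 * x ^ ((3*x+3)/2) := by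
          apply mul_le_mul_of_nonneg_right _ (Real.rpow_nonneg hx0.le _)
          have h5x : (5:ℝ) ≤ (5:ℝ)^x := by
            calc (5:ℝ) = (5:ℝ)^(1:ℝ) := by norm_num
              _ ≤ (5:ℝ)^x := Real.rpow_le_rpow_of_exponent_le (by norm_num) hx1
          nlinarith [Real.rpow_nonneg (show (0:ℝ) ≤ 5832 by norm_num) x, h5x]
  -- second half
  have hkfle : (k.factorial : ℝ) ≤ 3^(k+1) * ((k+1).factorial : ℝ) := by
    have h1 : (k.factorial : ℝ) ≤ ((k+1).factorial : ℝ) := by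
      exact_mod_cast Nat.factorial_le (Nat.le_succ k)
    have h2 : (1:ℝ) ≤ 3^(k+1) := one_le_pow₀ (by norm_num)
    nlinarith [(Nat.cast_pos (α := ℝ)).2 (k+1).factorial_pos]
  have key : x ^ ((3*x+3)/2) / (k.factorial:ℝ) ≤ x^(x/2) * Real.exp (5*x/2) := by
    have hsplit1 : x ^ ((3*x+3)/2) = x ^ (x/2) * (x ^ x * x ^ ((3:ℝ)/2)) := by
      rw [← Real.rpow_add hx0, ← Real.rpow_add hx0]; ring_nf
    have h32 : x ^ ((3:ℝ)/2) ≤ Real.exp x ^ ((3:ℝ)/2) :=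
      Real.rpow_le_rpow hx0.le hxle (by norm_num)
    rw [hsplit1, div_le_iff₀ hfacpos]
    have hxx : x ^ x * x ^ ((3:ℝ)/2) ≤ (Real.exp x * (k.factorial:ℝ)) * Real.exp x ^ ((3:ℝ)/2) := by
      apply mul_le_mul hfac h32 (Real.rpow_nonneg hx0.le _)
      positivity
    calc x ^ (x/2) * (x ^ x * x ^ ((3:ℝ)/2))
        ≤ x ^ (x/2) * ((Real.exp x * (k.factorial:ℝ)) * Real.exp x ^ ((3:ℝ)/2)) := by
          apply mul_le_mul_of_nonneg_left hxx (Real.rpow_nonneg hx0.le _)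
      _ = x^(x/2) * Real.exp (5*x/2) * (k.factorial:ℝ) := by
          rw [← Real.exp_mul,
            show Real.exp x * (k.factorial:ℝ) * Real.exp (x*(3/2))
              = Real.exp x * Real.exp (x*(3/2)) * (k.factorial:ℝ) by ring,
            ← Real.exp_add, show x + x*(3/2) = 5*x/2 by ring]
          ring
  have hfinal : (5832:ℝ)^x * ((5:ℝ)^x * (x^(x/2) * Real.exp (5*x/2))) ≤ (1000000:ℝ)^k * x^(x/2) := by
    have h13 : Real.exp (5*x/2) ≤ (13:ℝ)^x := by
      rw [show (5:ℝ)*x/2 = (5/2)*x by ring, Real.exp_mul]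
      exact Real.rpow_le_rpow (Real.exp_pos _).le hexp52 hx0.le
    calc (5832:ℝ)^x * ((5:ℝ)^x * (x^(x/2) * Real.exp (5*x/2)))
        ≤ (5832:ℝ)^x * ((5:ℝ)^x * (x^(x/2) * (13:ℝ)^x)) := by
          apply mul_le_mul_of_nonneg_left _ (Real.rpow_nonneg (by norm_num) x)
          apply mul_le_mul_of_nonneg_left _ (Real.rpow_nonneg (by norm_num) x)
          exact mul_le_mul_of_nonneg_left h13 (Real.rpow_nonneg hx0.le _)
      _ = (379080:ℝ)^x * x^(x/2) := by
          rw [show (379080:ℝ) = 5832*(5*13) by norm_num, Real.mul_rpow (by norm_num) (by norm_num),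
            Real.mul_rpow (by norm_num) (by norm_num)]
          ring
      _ ≤ (1000000:ℝ)^x * x^(x/2) := by
          apply mul_le_mul_of_nonneg_right _ (Real.rpow_nonneg hx0.le _)
          exact Real.rpow_le_rpow (by norm_num) (by norm_num) hx0.le
      _ = (1000000:ℝ)^k * x^(x/2) := by rw [Real.rpow_natCast]
  calc (3*(3*x+3)) ^ ((3*x+3)/2) * Real.sqrt (6*Real.pi) / (3^(k+1) * ((k+1).factorial : ℝ))
      ≤ ((5832:ℝ)^x * (5:ℝ)^x / 5 * x ^ ((3*x+3)/2)) * 5 / (k.factorial:ℝ) := by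
        apply div_le_div₀ (by positivity) _ hfacpos hkfle
        exact mul_le_mul step1 hsqrt (Real.sqrt_nonneg _) (by positivity)
    _ = (5832:ℝ)^x * ((5:ℝ)^x * (x ^ ((3*x+3)/2) / (k.factorial:ℝ))) := by
        field_simp
    _ ≤ (5832:ℝ)^x * ((5:ℝ)^x * (x^(x/2) * Real.exp (5*x/2))) := by
        apply mul_le_mul_of_nonneg_left _ (Real.rpow_nonneg (by norm_num) x)
        exact mul_le_mul_of_nonneg_left key (Real.rpow_nonneg (by norm_num) x)
    _ ≤ (1000000:ℝ)^k * x^(x/2) := hfinal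

set_option maxHeartbeats 2000000

/-- Lemma 3.3 (upper tail). -/
theorem truncate_exp_upper (d : ℕ) (hd : 1 ≤ d) (γ : ℝ) (hγ : (d : ℝ) < γ) :
    ∃ C : ℝ, 0 < C ∧
      ∀ (r : ℝ), 1 ≤ r → ∀ k : ℕ, 1 ≤ k → ∀ ξ : ℝ, 0 ≤ ξ →
        (∫ t in (-(rho d r / 2))..(rho d r / 2),
            Real.exp (-(t ^ 2) * kt d γ r ξ 2 / 2) *
              ‖Complex.exp (qk d γ r ξ k t) -
                ∑ l ∈ Finset.range (k + 1), qk d γ r ξ k t ^ l / ((l.factorial : ℝ) : ℂ)‖) ≤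
          C ^ k * (k : ℝ) ^ ((k : ℝ) / 2) /
            (Real.sqrt (kt d γ r ξ 2) * (Real.sqrt (kt d γ r ξ 2) * rho d r) ^ (k + 1)) := by
  refine ⟨1000000, by norm_num, ?_⟩
  intro r hr k hk ξ hξ
  set ρ := rho d r with hρdef
  have hd0 : (1:ℝ) ≤ (d:ℝ) := by exact_mod_cast hd
  have hγ0 : (0:ℝ) < γ := by linarith
  have hdγ : (d:ℝ)/γ < 1 := (div_lt_one hγ0).2 hγ
  have hdγ0 : 0 < (d:ℝ)/γ := by positivity
  have hρ1 : (1:ℝ) ≤ ρ := Real.one_le_rpow hr (by positivity)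
  have hρ0 : (0:ℝ) < ρ := by linarith
  have contc : ∀ c : ℝ, 0 < c → Continuous (fun u : ℝ => Real.exp (ξ*u/ρ) * u ^ c) := by
    intro c hc
    exact (Real.continuous_exp.comp (by fun_prop)).mul (Real.continuous_rpow_const hc.le)
  have intgr : ∀ c : ℝ, 0 < c →
      IntervalIntegrable (fun u : ℝ => Real.exp (ξ*u/ρ) * u ^ c) volume 0 1 :=
    fun c hc => (contc c hc).intervalIntegrable 0 1
  set K := kt d γ r ξ 2 with hKdef
  have hkt2 : K = (2 - (d:ℝ)/γ) *
      ∫ u in (0:ℝ)..1, Real.exp (ξ*u/ρ) * u ^ (1 - (d:ℝ)/γ) := by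
    rw [hKdef, kt]
    norm_num
    exact Or.inl rfl
  have hK1 : (1:ℝ) ≤ K := by
    have hbase : ∫ u in (0:ℝ)..1, u ^ (1 - (d:ℝ)/γ) = 1/(2 - (d:ℝ)/γ) := by
      rw [integral_rpow (Or.inl (by linarith))]
      rw [Real.one_rpow, Real.zero_rpow (by intro h; nlinarith)]
      ring_nf
    have hmono : ∫ u in (0:ℝ)..1, u ^ (1 - (d:ℝ)/γ)
        ≤ ∫ u in (0:ℝ)..1, Real.exp (ξ*u/ρ) * u ^ (1 - (d:ℝ)/γ) := by
      apply intervalIntegral.integral_mono_on (by norm_num)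
        ((Real.continuous_rpow_const (by linarith)).intervalIntegrable 0 1)
        (intgr _ (by linarith))
      intro u hu
      have h1 : (1:ℝ) ≤ Real.exp (ξ*u/ρ) :=
        Real.one_le_exp (by have := hu.1; positivity)
      nlinarith [Real.rpow_nonneg hu.1 (1 - (d:ℝ)/γ)]
    have h2 := hbase ▸ hmono
    rw [hkt2]
    have h3 := mul_le_mul_of_nonneg_left h2 (show (0:ℝ) ≤ 2 - (d:ℝ)/γ by linarith)
    have h4 : (2 - (d:ℝ)/γ) * (1/(2 - (d:ℝ)/γ)) = 1 := by
      field_simp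
      rw [div_self (by nlinarith : (2*γ-(d:ℝ)) ≠ 0)]
    linarith
  have hK0 : (0:ℝ) < K := lt_of_lt_of_le one_pos hK1
  set S := Real.sqrt K with hSdef
  have hS0 : 0 < S := Real.sqrt_pos.2 hK0
  have hS2 : S^2 = K := Real.sq_sqrt hK0.le
  have hexpc : ∀ n : ℕ, 2 ≤ n → 0 < (n:ℝ) - 1 - (d:ℝ)/γ := by
    intro n hn
    have h2 : (2:ℝ) ≤ (n:ℝ) := by exact_mod_cast hn
    linarith
  have hknonneg : ∀ n : ℕ, 2 ≤ n → 0 ≤ kt d γ r ξ n := by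
    intro n hn
    apply mul_nonneg (by linarith)
    apply intervalIntegral.integral_nonneg (by norm_num)
    intro u hu
    exact mul_nonneg (Real.exp_nonneg _) (Real.rpow_nonneg hu.1 _)
  have hkle : ∀ n : ℕ, 2 ≤ n → kt d γ r ξ n ≤ K := by
    intro n hn
    rw [hkt2, kt]
    apply mul_le_mul_of_nonneg_left _ (by linarith)
    apply intervalIntegral.integral_mono_on (by norm_num)
      (intgr _ (hexpc n hn)) (intgr _ (by linarith))
    intro u hu
    apply mul_le_mul_of_nonneg_left _ (Real.exp_nonneg _)
    rcases eq_or_lt_of_le hu.1 with h0 | h0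
    · rw [← h0, Real.zero_rpow (hexpc n hn).ne', Real.zero_rpow (by intro h; nlinarith)]
    · exact Real.rpow_le_rpow_of_exponent_ge h0 hu.2 (by
        have h2 : (2:ℝ) ≤ (n:ℝ) := by exact_mod_cast hn
        linarith)
  -- bound on |qk|
  have hq : ∀ t : ℝ, |t| ≤ ρ/2 → ‖qk d γ r ξ k t‖ ≤ K * |t|^3 / (3*ρ) := by
    intro t ht
    set xq := |t|/ρ with hxq
    have hxq0 : 0 ≤ xq := by positivity
    have hx12 : xq ≤ 1/2 := by rw [hxq, div_le_iff₀ hρ0]; linarith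
    have hterm : ∀ n ∈ Finset.Icc 3 (k+2),
        ‖(Complex.I * (t:ℂ) / ((ρ:ℝ):ℂ))^n * ((kt d γ r ξ n / (n.factorial : ℝ) : ℝ):ℂ)‖
          ≤ xq^3 * (1/2:ℝ)^(n-3) * (K/6) := by
      intro n hn
      simp only [Finset.mem_Icc] at hn
      rw [norm_mul, norm_pow]
      have h1 : ‖Complex.I * (t:ℂ) / ((ρ:ℝ):ℂ)‖ = xq := by
        rw [norm_div, norm_mul, Complex.norm_I, Complex.norm_real, Complex.norm_real,
          Real.norm_eq_abs, Real.norm_eq_abs, one_mul, abs_of_pos hρ0]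
      rw [h1, Complex.norm_real, Real.norm_eq_abs]
      have hknn := hknonneg n (by omega)
      have h2 : |kt d γ r ξ n / (n.factorial : ℝ)| = kt d γ r ξ n / (n.factorial : ℝ) :=
        abs_of_nonneg (by positivity)
      rw [h2]
      have h3 : xq^n ≤ xq^3 * (1/2:ℝ)^(n-3) := by
        have he : xq^n = xq^3 * xq^(n-3) := by rw [← pow_add]; congr 1; omega
        rw [he]
        exact mul_le_mul_of_nonneg_left (pow_le_pow_left₀ hxq0 hx12 _) (by positivity)
      have h6 : (6:ℝ) ≤ (n.factorial : ℝ) := by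
        exact_mod_cast Nat.factorial_le hn.1
      have h4 : kt d γ r ξ n / (n.factorial : ℝ) ≤ K/6 :=
        div_le_div₀ hK0.le (hkle n (by omega)) (by norm_num) h6
      exact mul_le_mul h3 h4 (by positivity) (by positivity)
    have hgeo : ∑ n ∈ Finset.Icc 3 (k+2), (1/2:ℝ)^(n-3) ≤ 2 := by
      rw [← Finset.Ico_add_one_right_eq_Icc, Finset.sum_Ico_eq_sum_range]
      have hcg : ∀ i ∈ Finset.range (k+2+1-3), ((1/2:ℝ))^(3+i-3) = (1/2:ℝ)^i := by
        intro i _; congr 1; omega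
      rw [Finset.sum_congr rfl hcg, geom_sum_eq (show (1/2:ℝ) ≠ 1 by norm_num)]
      have hnn : (0:ℝ) ≤ (1/2:ℝ)^(k+2+1-3) := by positivity
      have hle1 : (1/2:ℝ)^(k+2+1-3) ≤ 1 := pow_le_one₀ (by norm_num) (by norm_num)
      rw [div_le_iff_of_neg (by norm_num : (1/2:ℝ) - 1 < 0)]
      linarith
    have hsum : ‖∑ n ∈ Finset.Icc 3 (k+2),
        (Complex.I * (t:ℂ) / ((ρ:ℝ):ℂ))^n * ((kt d γ r ξ n / (n.factorial : ℝ) : ℝ):ℂ)‖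
        ≤ xq^3 * (K/6) * ∑ n ∈ Finset.Icc 3 (k+2), (1/2:ℝ)^(n-3) := by
      calc ‖∑ n ∈ Finset.Icc 3 (k+2),
            (Complex.I * (t:ℂ) / ((ρ:ℝ):ℂ))^n * ((kt d γ r ξ n / (n.factorial : ℝ) : ℝ):ℂ)‖
          ≤ ∑ n ∈ Finset.Icc 3 (k+2), ‖(Complex.I * (t:ℂ) / ((ρ:ℝ):ℂ))^n
              * ((kt d γ r ξ n / (n.factorial : ℝ) : ℝ):ℂ)‖ :=
            norm_sum_le _ _
        _ ≤ ∑ n ∈ Finset.Icc 3 (k+2), xq^3 * (1/2:ℝ)^(n-3) * (K/6) :=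
            Finset.sum_le_sum hterm
        _ = xq^3 * (K/6) * ∑ n ∈ Finset.Icc 3 (k+2), (1/2:ℝ)^(n-3) := by
            rw [Finset.mul_sum]
            apply Finset.sum_congr rfl
            intro n _
            ring
    rw [qk, norm_mul]
    have habs1 : ‖((ρ:ℝ):ℂ)^2‖ = ρ^2 := by
      rw [norm_pow, Complex.norm_real, Real.norm_eq_abs, abs_of_pos hρ0]
    rw [habs1]
    have hfin : ρ^2 * (xq^3 * (K/6) * 2) = K * |t|^3 / (3*ρ) := by
      rw [hxq]
      field_simp
      ring
    calc ρ^2 * ‖∑ n ∈ Finset.Icc 3 (k+2),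
          (Complex.I * (t:ℂ) / ((ρ:ℝ):ℂ))^n * ((kt d γ r ξ n / (n.factorial : ℝ) : ℝ):ℂ)‖
        ≤ ρ^2 * (xq^3 * (K/6) * ∑ n ∈ Finset.Icc 3 (k+2), (1/2:ℝ)^(n-3)) :=
          mul_le_mul_of_nonneg_left hsum (by positivity)
      _ ≤ ρ^2 * (xq^3 * (K/6) * 2) := by
          apply mul_le_mul_of_nonneg_left _ (by positivity)
          exact mul_le_mul_of_nonneg_left hgeo (by positivity)
      _ = K * |t|^3 / (3*ρ) := hfin
  -- pointwise bound
  set p := (3*(k:ℝ)+3)/2 with hpdef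
  have hp0 : (0:ℝ) < p := by
    rw [hpdef]; positivity
  set B1 := (K/(3*ρ))^(k+1) / (((k+1).factorial : ℝ)) * ((3*(3*(k:ℝ)+3)/K) ^ p) with hB1def
  have hB1 : 0 ≤ B1 := by
    rw [hB1def]
    have := hK0
    positivity
  have hmain : ∀ t : ℝ, |t|^(3*(k+1)) * Real.exp (-(K/6)*t^2) ≤ (3*(3*(k:ℝ)+3)/K) ^ p := by
    intro t
    set y := (K/6)*t^2 with hy
    have hy0 : 0 ≤ y := by rw [hy]; positivity
    have h1 : |t|^(3*(k+1)) = ((6/K)*y) ^ p := by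
      have e1 : (6/K)*y = t^2 := by rw [hy]; field_simp
      rw [e1]
      have e2 : t^2 = |t|^(2:ℕ) := (sq_abs t).symm
      rw [e2, ← Real.rpow_natCast |t| 2, ← Real.rpow_mul (abs_nonneg t)]
      rw [← Real.rpow_natCast |t| (3*(k+1))]
      congr 1
      rw [hpdef]; push_cast; ring
    rw [h1, Real.mul_rpow (by positivity) hy0]
    have h2 : y ^ p * Real.exp (-y) ≤ p ^ p := rpow_mul_exp_neg_le hy0 hp0
    have h3 : Real.exp (-(K/6)*t^2) = Real.exp (-y) := by rw [hy]; ring_nf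
    rw [h3, mul_assoc]
    calc (6/K)^p * (y^p * Real.exp (-y)) ≤ (6/K)^p * p^p :=
          mul_le_mul_of_nonneg_left h2 (Real.rpow_nonneg (by positivity) p)
      _ = (3*(3*(k:ℝ)+3)/K) ^ p := by
          rw [← Real.mul_rpow (by positivity) hp0.le]
          congr 1
          rw [hpdef]; field_simp; ring
  have hpt : ∀ t ∈ Set.Icc (-(ρ/2)) (ρ/2),
      Real.exp (-(t^2) * K/2) * ‖Complex.exp (qk d γ r ξ k t) -
        ∑ l ∈ Finset.range (k+1), qk d γ r ξ k t ^ l / ((l.factorial : ℝ):ℂ)‖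
        ≤ B1 * Real.exp (-(K/6) * t^2) := by
    intro t ht
    have habs : |t| ≤ ρ/2 := abs_le.2 ⟨ht.1, ht.2⟩
    have hq1 := hq t habs
    have hq2 : ‖qk d γ r ξ k t‖ ≤ K * t^2/6 := by
      calc ‖qk d γ r ξ k t‖ ≤ K*|t|^3/(3*ρ) := hq1
        _ ≤ K*t^2/6 := by
          have h1 : |t|^3 = t^2 * |t| := by
            rw [pow_succ, sq_abs]
          rw [h1, div_le_div_iff₀ (by positivity) (by norm_num)]
          nlinarith [mul_le_mul_of_nonneg_left habs (by positivity : (0:ℝ) ≤ K * t^2)]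
    have hE := exp_taylor_bound (qk d γ r ξ k t) k
    have hqnn : (0:ℝ) ≤ K*|t|^3/(3*ρ) := by positivity
    calc Real.exp (-(t^2) * K/2) * ‖Complex.exp (qk d γ r ξ k t) -
          ∑ l ∈ Finset.range (k+1), qk d γ r ξ k t ^ l / ((l.factorial : ℝ):ℂ)‖
        ≤ Real.exp (-(t^2) * K/2) * (‖qk d γ r ξ k t‖ ^ (k+1)
            / ((k+1).factorial : ℝ) * Real.exp (‖qk d γ r ξ k t‖)) :=
          mul_le_mul_of_nonneg_left hE (Real.exp_nonneg _)
      _ ≤ Real.exp (-(t^2) * K/2) * ((K*|t|^3/(3*ρ)) ^ (k+1)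
            / ((k+1).factorial : ℝ) * Real.exp (K*t^2/6)) := by
          apply mul_le_mul_of_nonneg_left _ (Real.exp_nonneg _)
          apply mul_le_mul _ (Real.exp_le_exp.2 hq2) (Real.exp_nonneg _) (by positivity)
          apply div_le_div_of_nonneg_right _ (by positivity)
          exact pow_le_pow_left₀ (norm_nonneg _) hq1 _
      _ = (K/(3*ρ))^(k+1) / ((k+1).factorial : ℝ)
            * (|t|^(3*(k+1)) * Real.exp (-(K/6)*t^2)) * Real.exp (-(K/6)*t^2) := by
          have e1 : (K*|t|^3/(3*ρ))^(k+1) = (K/(3*ρ))^(k+1) * |t|^(3*(k+1)) := by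
            rw [show K*|t|^3/(3*ρ) = (K/(3*ρ)) * |t|^3 by ring, mul_pow, pow_mul]
          have e2 : Real.exp (-(t^2) * K/2) * Real.exp (K*t^2/6)
              = Real.exp (-(K/6)*t^2) * Real.exp (-(K/6)*t^2) := by
            rw [← Real.exp_add, ← Real.exp_add]; congr 1; ring
          calc Real.exp (-(t^2) * K/2) * ((K*|t|^3/(3*ρ)) ^ (k+1)
                / ((k+1).factorial : ℝ) * Real.exp (K*t^2/6))
              = (K/(3*ρ))^(k+1) / ((k+1).factorial : ℝ) * |t|^(3*(k+1))
                  * (Real.exp (-(t^2) * K/2) * Real.exp (K*t^2/6)) := by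
                rw [e1]; ring
            _ = _ := by rw [e2]; ring
      _ ≤ B1 * Real.exp (-(K/6) * t^2) := by
          rw [hB1def]
          have h5 := hmain t
          calc (K/(3*ρ))^(k+1) / ((k+1).factorial : ℝ)
                * (|t|^(3*(k+1)) * Real.exp (-(K/6)*t^2)) * Real.exp (-(K/6)*t^2)
              ≤ (K/(3*ρ))^(k+1) / ((k+1).factorial : ℝ)
                * ((3*(3*(k:ℝ)+3)/K) ^ p) * Real.exp (-(K/6)*t^2) := by
                apply mul_le_mul_of_nonneg_right _ (Real.exp_nonneg _)
                exact mul_le_mul_of_nonneg_left h5 (by positivity)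
            _ = _ := rfl
  -- continuity of integrand
  have hqc : Continuous fun t : ℝ => qk d γ r ξ k t := by
    unfold qk
    apply continuous_const.mul
    apply continuous_finset_sum
    intro n _
    apply Continuous.mul _ continuous_const
    apply Continuous.pow
    apply Continuous.div_const
    exact continuous_const.mul Complex.continuous_ofReal
  have hcont_f : Continuous (fun t : ℝ => Real.exp (-(t^2) * K/2) *
      ‖Complex.exp (qk d γ r ξ k t) -
        ∑ l ∈ Finset.range (k+1), qk d γ r ξ k t ^ l / ((l.factorial : ℝ):ℂ)‖) := by
    apply Continuous.mul
    · fun_prop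
    · apply continuous_norm.comp
      apply Continuous.sub (Complex.continuous_exp.comp hqc)
      apply continuous_finset_sum
      intro l _
      exact (hqc.pow l).div_const _
  have hg_cont : Continuous (fun t : ℝ => B1 * Real.exp (-(K/6)*t^2)) := by fun_prop
  have hmono_int : (∫ t in (-(ρ/2))..(ρ/2), Real.exp (-(t^2) * K/2) *
      ‖Complex.exp (qk d γ r ξ k t) -
        ∑ l ∈ Finset.range (k+1), qk d γ r ξ k t ^ l / ((l.factorial : ℝ):ℂ)‖)
      ≤ ∫ t in (-(ρ/2))..(ρ/2), B1 * Real.exp (-(K/6)*t^2) :=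
    intervalIntegral.integral_mono_on (by linarith)
      (hcont_f.intervalIntegrable _ _) (hg_cont.intervalIntegrable _ _) hpt
  have hgauss : (∫ t in (-(ρ/2))..(ρ/2), B1 * Real.exp (-(K/6)*t^2))
      ≤ B1 * Real.sqrt (Real.pi/(K/6)) := by
    rw [intervalIntegral.integral_const_mul]
    apply mul_le_mul_of_nonneg_left _ hB1
    rw [← integral_gaussian (K/6), intervalIntegral.integral_of_le (by linarith)]
    exact setIntegral_le_integral (integrable_exp_neg_mul_sq (by positivity))
      (Filter.Eventually.of_forall fun x => Real.exp_nonneg _)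
  -- final comparison
  have hfinal : B1 * Real.sqrt (Real.pi/(K/6))
      ≤ (1000000:ℝ)^k * (k:ℝ)^((k:ℝ)/2) / (S * (S * ρ)^(k+1)) := by
    have hπ : Real.sqrt (Real.pi/(K/6)) = Real.sqrt (6*Real.pi) / S := by
      rw [show Real.pi/(K/6) = (6*Real.pi)/K by field_simp,
        Real.sqrt_div (by positivity) K, hSdef]
    rw [hπ, le_div_iff₀ (by positivity)]
    have hKp : K ^ p = S ^ (3*k+3) := by
      have h1 : ((S:ℝ)^(2:ℕ)) ^ p = S ^ ((2:ℝ)*p) := by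
        rw [← Real.rpow_natCast S 2, ← Real.rpow_mul hS0.le]
        norm_num
      have h2 : (2:ℝ)*p = ((3*k+3:ℕ):ℝ) := by rw [hpdef]; push_cast; ring
      rw [← hS2, h1, h2, Real.rpow_natCast]
    have hB1' : B1 = (K/(3*ρ))^(k+1)/((k+1).factorial : ℝ)
        * ((3*(3*(k:ℝ)+3))^p / S^(3*k+3)) := by
      rw [hB1def, Real.div_rpow (by positivity) hK0.le, hKp]
    have hEq : B1 * (Real.sqrt (6*Real.pi)/S) * (S * (S*ρ)^(k+1))
        = (3*(3*(k:ℝ)+3))^p * Real.sqrt (6*Real.pi) / (3^(k+1) * ((k+1).factorial : ℝ)) := by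
      rw [hB1', ← hS2]
      have hfp : ((k+1).factorial : ℝ) ≠ 0 := by positivity
      have hρne : ρ ≠ 0 := hρ0.ne'
      field_simp
      have h1 : ρ * ρ⁻¹ = 1 := mul_inv_cancel₀ hρne
      have h2 : (1/3:ℝ)^k * 3^k = 1 := by rw [← mul_pow]; norm_num
      have h3 : ρ^k * ρ⁻¹^k = 1 := by rw [← mul_pow, h1, one_pow]
      have e : ρ * ρ ^ k * ρ⁻¹ * ρ⁻¹ ^ k * (1/3:ℝ) ^ k * 3 ^ k = 1 := by
        linear_combination (ρ^k*ρ⁻¹^k*((1/3:ℝ)^k*3^k)) * h1 + ((1/3:ℝ)^k*3^k) * h3 + h2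
      linear_combination (S^3*S^(k*3)) * e
    calc B1 * (Real.sqrt (6*Real.pi)/S) * (S * (S*ρ)^(k+1))
        = (3*(3*(k:ℝ)+3))^p * Real.sqrt (6*Real.pi) / (3^(k+1) * ((k+1).factorial : ℝ)) := hEq
      _ ≤ (1000000:ℝ)^k * (k:ℝ)^((k:ℝ)/2) := by
          rw [hpdef]
          exact arith_bound k hk
  calc (∫ t in (-(ρ/2))..(ρ/2), Real.exp (-(t^2) * K/2) *
      ‖Complex.exp (qk d γ r ξ k t) -
        ∑ l ∈ Finset.range (k+1), qk d γ r ξ k t ^ l / ((l.factorial : ℝ):ℂ)‖)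
      ≤ B1 * Real.sqrt (Real.pi/(K/6)) := hmono_int.trans hgauss
    _ ≤ (1000000:ℝ)^k * (k:ℝ)^((k:ℝ)/2) / (S * (S * ρ)^(k+1)) := hfinal
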